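/- Let Q be an N×N complex Hermitian positive definite matrix and A an N×N complex Hermitian matrix, and let δ be the number of strictly positive eigenvalues of Q⁻¹A (counted with multiplicity). Then for every index set T of cardinality m > N − δ, the matrix Q_T⁻¹A_T, where Q_T and A_T are the m×m principal submatrices of Q and A on the index set T, has at least one strictly positive eigenvalue; in particular A_T ≠ 0. -/

import Mathlib

open Matrix Polynomial
open scoped ComplexOrder

variable {n : Type*} [Fintype n] [DecidableEq n]

lemma charpoly_similar (P M : Matrix n n ℂ) (hP : IsUnit P.det) :
    (P * M * P⁻¹).charpoly = M.charpoly := by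
  have h1 : P * P⁻¹ = 1 := mul_nonsing_inv P hP
  have key : charmatrix (P * M * P⁻¹) =
      P.map Polynomial.C * charmatrix M * (P⁻¹).map Polynomial.C := by
    simp only [charmatrix, RingHom.mapMatrix_apply, mul_sub, sub_mul]
    congr 1
    · rw [← (scalar_commute (X : ℂ[X]) (fun r => Commute.all _ _) (P.map C)).eq, mul_assoc,
        ← Matrix.map_mul, h1, Matrix.map_one _ (map_zero _) (map_one _), mul_one]
    · rw [← Matrix.map_mul, ← Matrix.map_mul]
  have hdet : (P.map Polynomial.C).det * ((P⁻¹).map Polynomial.C).det = 1 := by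
    rw [← det_mul, ← Matrix.map_mul, h1, Matrix.map_one _ (map_zero _) (map_one _), det_one]
  rw [Matrix.charpoly, key, det_mul, det_mul, mul_comm, ← mul_assoc, mul_comm ((P⁻¹).map C).det,
    hdet, one_mul, Matrix.charpoly]

lemma charpoly_diagonal_real (μ : n → ℝ) :
    (diagonal ((↑) ∘ μ : n → ℂ)).charpoly = ∏ i, (X - C ((μ i : ℂ))) := by
  rw [Matrix.charpoly, charmatrix, RingHom.mapMatrix_apply, scalar_apply,
    Matrix.diagonal_map (map_zero _)]
  have : ((diagonal fun _ => (X : ℂ[X])) - diagonal fun m => C ((Complex.ofReal ∘ μ) m))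
      = diagonal (fun i => X - C ((μ i : ℂ))) := by
    rw [diagonal_sub]; rfl
  rw [this, det_diagonal]

lemma herm_charpoly_roots {B : Matrix n n ℂ} (hB : B.IsHermitian) :
    B.charpoly.roots = Finset.univ.val.map (fun i => (hB.eigenvalues i : ℂ)) := by
  have hU1 : (hB.eigenvectorUnitary : Matrix n n ℂ) * star (hB.eigenvectorUnitary : Matrix n n ℂ)
      = 1 := mem_unitaryGroup_iff.mp hB.eigenvectorUnitary.2
  have hUdet : IsUnit (hB.eigenvectorUnitary : Matrix n n ℂ).det :=
    IsUnit.of_mul_eq_one _ (by rw [← det_mul, hU1, det_one])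
  have hUinv : (hB.eigenvectorUnitary : Matrix n n ℂ)⁻¹
      = star (hB.eigenvectorUnitary : Matrix n n ℂ) := inv_eq_right_inv hU1
  have hcp : B.charpoly = (diagonal ((↑) ∘ hB.eigenvalues : n → ℂ)).charpoly := by
    conv_lhs => rw [hB.spectral_theorem, Unitary.conjStarAlgAut_apply, ← hUinv]
    exact charpoly_similar _ _ hUdet
  rw [hcp, charpoly_diagonal_real]
  have : (∏ i, (X - C ((hB.eigenvalues i : ℂ))))
      = ((Finset.univ.val.map (fun i => (hB.eigenvalues i : ℂ))).map fun a => X - C a).prod := by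
    rw [Multiset.map_map]; rfl
  rw [this, roots_multiset_prod_X_sub_C]

lemma quad_conj (M A : Matrix n n ℂ) (x : n → ℂ) :
    star (M *ᵥ x) ⬝ᵥ (A *ᵥ (M *ᵥ x)) = star x ⬝ᵥ ((Mᴴ * A * M) *ᵥ x) := by
  rw [star_mulVec, ← dotProduct_mulVec]
  simp [mulVec_mulVec, Matrix.mul_assoc]

lemma quad_diag (μ : n → ℝ) (v : n → ℂ) :
    star v ⬝ᵥ ((diagonal ((↑) ∘ μ : n → ℂ)) *ᵥ v)
      = ((∑ i, μ i * Complex.normSq (v i) : ℝ) : ℂ) := by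
  push_cast
  rw [dotProduct]
  refine Finset.sum_congr rfl fun i _ => ?_
  simp only [mulVec_diagonal, Pi.star_apply, Function.comp_apply]
  rw [show ((Complex.normSq (v i) : ℂ)) = (starRingEnd ℂ) (v i) * v i by
    rw [Complex.normSq_eq_conj_mul_self]]
  simp only [Pi.star_apply, Complex.star_def]
  ring

open scoped MatrixOrder in
lemma sqrt_setup {QQ : Matrix n n ℂ} (hQQ : QQ.PosDef) :
    ∃ S : Matrix n n ℂ, S.IsHermitian ∧ IsUnit S.det ∧ S * S = QQ⁻¹ := by
  refine ⟨CFC.sqrt QQ⁻¹, (Matrix.nonneg_iff_posSemidef.mp (CFC.sqrt_nonneg QQ⁻¹)).isHermitian, ?_,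
    CFC.sqrt_mul_sqrt_self _ (Matrix.nonneg_iff_posSemidef.mpr hQQ.inv.posSemidef)⟩
  have h1 : (CFC.sqrt QQ⁻¹).det * (CFC.sqrt QQ⁻¹).det = (QQ⁻¹).det := by
    rw [← det_mul, CFC.sqrt_mul_sqrt_self _ (Matrix.nonneg_iff_posSemidef.mpr hQQ.inv.posSemidef)]
  exact isUnit_of_mul_isUnit_left (h1 ▸ hQQ.inv.det_pos.ne'.isUnit)


lemma charpoly_inv_mul_eq {QQ AA S : Matrix n n ℂ} (hQQ : QQ.PosDef)
    (hSu : IsUnit S.det) (hSS : S * S = QQ⁻¹) :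
    (QQ⁻¹ * AA).charpoly = (S * AA * S).charpoly := by
  have hQdet : IsUnit QQ.det := hQQ.det_pos.ne'.isUnit
  have hQinvdet : IsUnit (QQ⁻¹).det := hQQ.inv.det_pos.ne'.isUnit
  have e1 : (QQ⁻¹ * AA).charpoly = (AA * QQ⁻¹).charpoly := by
    have h := charpoly_similar QQ⁻¹ (AA * QQ⁻¹) hQinvdet
    rw [nonsing_inv_nonsing_inv QQ hQdet] at h
    rw [← h]
    congr 1
    rw [Matrix.mul_assoc, Matrix.mul_assoc, nonsing_inv_mul QQ hQdet, Matrix.mul_one]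
  have hBS : S⁻¹ * (S * AA * S) * S = AA * QQ⁻¹ := by
    simp only [Matrix.mul_assoc]
    rw [← Matrix.mul_assoc S⁻¹ S, nonsing_inv_mul S hSu, Matrix.one_mul, hSS]
  have e2 : (AA * QQ⁻¹).charpoly = (S * AA * S).charpoly := by
    have h := charpoly_similar S⁻¹ (S * AA * S) (isUnit_nonsing_inv_det S hSu)
    rwa [nonsing_inv_nonsing_inv S hSu, hBS] at h
  exact e1.trans e2

lemma key_exists_pos_root {QQ AA : Matrix n n ℂ} (hQQ : QQ.PosDef) (hAA : AA.IsHermitian)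
    (y : n → ℂ) (hy : 0 < (star y ⬝ᵥ (AA *ᵥ y)).re) :
    ∃ z ∈ (QQ⁻¹ * AA).charpoly.roots, 0 < z.re ∧ z.im = 0 := by
  obtain ⟨S, hSh, hSu, hSS⟩ := sqrt_setup hQQ
  set B := S * AA * S with hBdef
  have hB : B.IsHermitian := by
    unfold Matrix.IsHermitian
    rw [hBdef, conjTranspose_mul, conjTranspose_mul, hSh.eq, hAA.eq, Matrix.mul_assoc]
  have hcp : (QQ⁻¹ * AA).charpoly = B.charpoly := charpoly_inv_mul_eq hQQ hSu hSS
  have hSu' := hSu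
  obtain ⟨w, hSw⟩ : ∃ w, S *ᵥ w = y :=
    ⟨S⁻¹ *ᵥ y, by rw [mulVec_mulVec, mul_nonsing_inv S hSu, one_mulVec]⟩
  have hwB : star w ⬝ᵥ (B *ᵥ w) = star y ⬝ᵥ (AA *ᵥ y) := by
    rw [← hSw, quad_conj S AA w, hSh.eq, ← hBdef]
  obtain ⟨Uc, hU1, hdiag⟩ : ∃ U : Matrix n n ℂ, U * star U = 1 ∧
      Uᴴ * B * U = diagonal ((↑) ∘ hB.eigenvalues : n → ℂ) := by
    refine ⟨(hB.eigenvectorUnitary : Matrix n n ℂ),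
      mem_unitaryGroup_iff.mp hB.eigenvectorUnitary.2, ?_⟩
    rw [← star_eq_conjTranspose]
    simpa [Unitary.conjStarAlgAut_apply] using hB.conjStarAlgAut_star_eigenvectorUnitary
  obtain ⟨c, hwc⟩ : ∃ c, Uc *ᵥ c = w :=
    ⟨star Uc *ᵥ w, by rw [mulVec_mulVec, hU1, one_mulVec]⟩
  have hq : star c ⬝ᵥ ((diagonal ((↑) ∘ hB.eigenvalues : n → ℂ)) *ᵥ c)
      = star y ⬝ᵥ (AA *ᵥ y) := by
    have h2 := quad_conj Uc B c
    rw [hwc] at h2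
    rw [← hdiag, ← h2, hwB]
  have hsum : 0 < ∑ i, hB.eigenvalues i * Complex.normSq (c i) := by
    rw [quad_diag hB.eigenvalues c] at hq
    have h3 : ((∑ i, hB.eigenvalues i * Complex.normSq (c i) : ℝ) : ℂ).re
        = (star y ⬝ᵥ (AA *ᵥ y)).re := by rw [hq]
    rw [Complex.ofReal_re] at h3
    rw [h3]; exact hy
  have hex : ∃ i, 0 < hB.eigenvalues i := by
    by_contra h
    push_neg at h
    have : ∑ i, hB.eigenvalues i * Complex.normSq (c i) ≤ 0 :=
      Finset.sum_nonpos fun i _ => mul_nonpos_of_nonpos_of_nonneg (h i) (Complex.normSq_nonneg _)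
    linarith
  obtain ⟨i, hi⟩ := hex
  refine ⟨(hB.eigenvalues i : ℂ), ?_, by simpa using hi, by simp⟩
  rw [hcp, herm_charpoly_roots hB]
  exact Multiset.mem_map.mpr ⟨i, Finset.mem_univ i, rfl⟩

section Ext

variable {α β : Type*} [Fintype α] [Fintype β] [DecidableEq α] [DecidableEq β]

/-- Extension by zero along an injection. -/
noncomputable def extMap (g : α → β) : (α → ℂ) →ₗ[ℂ] (β → ℂ) where
  toFun y := fun j => if h : ∃ i, g i = j then y h.choose else 0
  map_add' y z := by funext j; by_cases h : ∃ i, g i = j <;> simp [h]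
  map_smul' c y := by funext j; by_cases h : ∃ i, g i = j <;> simp [h]

lemma extMap_apply_g {g : α → β} (hg : Function.Injective g) (y : α → ℂ) (i : α) :
    extMap g y (g i) = y i := by
  have h : ∃ i', g i' = g i := ⟨i, rfl⟩
  simp only [extMap, LinearMap.coe_mk, AddHom.coe_mk, dif_pos h]
  exact congrArg y (hg h.choose_spec)

lemma extMap_apply_not {g : α → β} (y : α → ℂ) {j : β} (hj : ¬ ∃ i, g i = j) :
    extMap g y j = 0 := by
  simp only [extMap, LinearMap.coe_mk, AddHom.coe_mk, dif_neg hj]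

lemma extMap_injective {g : α → β} (hg : Function.Injective g) :
    Function.Injective (extMap g) := by
  intro y z h
  funext i
  have := congrFun h (g i)
  rwa [extMap_apply_g hg, extMap_apply_g hg] at this

lemma extMap_star {g : α → β} (y : α → ℂ) (j : β) :
    extMap g (star y) j = star (extMap g y j) := by
  by_cases h : ∃ i, g i = j
  · simp only [extMap, LinearMap.coe_mk, AddHom.coe_mk, dif_pos h, Pi.star_apply]
  · simp only [extMap, LinearMap.coe_mk, AddHom.coe_mk, dif_neg h, star_zero]

lemma sum_extMap {g : α → β} (hg : Function.Injective g) (y : α → ℂ) (f : β → ℂ) :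
    ∑ j, extMap g y j * f j = ∑ i, y i * f (g i) := by
  calc ∑ j, extMap g y j * f j
      = ∑ j ∈ Finset.univ.image g, extMap g y j * f j := by
        refine (Finset.sum_subset (Finset.subset_univ _) fun j _ hj => ?_).symm
        rw [extMap_apply_not y (fun ⟨i, hi⟩ => hj (Finset.mem_image.mpr
          ⟨i, Finset.mem_univ i, hi⟩)), zero_mul]
    _ = ∑ i, extMap g y (g i) * f (g i) :=
        Finset.sum_image (fun a _ b _ hab => hg hab)
    _ = ∑ i, y i * f (g i) := by
        refine Finset.sum_congr rfl fun i _ => ?_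
        rw [extMap_apply_g hg]

lemma mulVec_extMap {g : α → β} (hg : Function.Injective g) (M : Matrix β β ℂ)
    (y : α → ℂ) (i : α) :
    (M *ᵥ extMap g y) (g i) = ((M.submatrix g g) *ᵥ y) i := by
  simp only [mulVec, dotProduct, submatrix_apply]
  calc ∑ j, M (g i) j * extMap g y j
      = ∑ j, extMap g y j * M (g i) j := by simp [mul_comm]
    _ = ∑ i', y i' * M (g i) (g i') := sum_extMap hg y (M (g i))
    _ = ∑ i', M (g i) (g i') * y i' := by simp [mul_comm]

lemma quad_extMap {g : α → β} (hg : Function.Injective g) (M : Matrix β β ℂ) (y : α → ℂ) :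
    star (extMap g y) ⬝ᵥ (M *ᵥ extMap g y) = star y ⬝ᵥ ((M.submatrix g g) *ᵥ y) := by
  calc star (extMap g y) ⬝ᵥ (M *ᵥ extMap g y)
      = ∑ j, extMap g (star y) j * (M *ᵥ extMap g y) j := by
        refine Finset.sum_congr rfl fun j _ => ?_
        rw [extMap_star]
        rfl
    _ = ∑ i, star y i * (M *ᵥ extMap g y) (g i) := sum_extMap hg (star y) _
    _ = ∑ i, star y i * ((M.submatrix g g) *ᵥ y) i := by
        refine Finset.sum_congr rfl fun i _ => ?_
        rw [mulVec_extMap hg]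
    _ = star y ⬝ᵥ ((M.submatrix g g) *ᵥ y) := rfl

end Ext

/-- Let `δ` be the number of strictly positive eigenvalues of `Q⁻¹A` (with multiplicity),
where `Q` is Hermitian positive definite and `A` Hermitian. Then for every index set of
cardinality `m > N − δ` (enumerated by an injective `g : Fin m → Fin N`), the matrix
`Q_T⁻¹A_T` has at least one strictly positive (real) eigenvalue; in particular `A_T ≠ 0`. -/
theorem stmt3 (N : ℕ) (Q A : Matrix (Fin N) (Fin N) ℂ)
    (hQ : Q.PosDef) (hA : A.IsHermitian) (δ : ℕ)
    (hδ : δ = (((Q⁻¹ * A).charpoly).roots.filter (fun z => 0 < z.re)).card)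
    (m : ℕ) (hm : N - δ < m) (g : Fin m → Fin N) (hg : Function.Injective g) :
    (∃ z ∈ (((Q.submatrix g g)⁻¹ * (A.submatrix g g)).charpoly).roots,
      0 < z.re ∧ z.im = 0) ∧
    A.submatrix g g ≠ 0 := by
  classical
  obtain ⟨S₀, hS₀h, hS₀u, hS₀S⟩ := sqrt_setup hQ
  have hB₀ : (S₀ * A * S₀).IsHermitian := by
    unfold Matrix.IsHermitian
    rw [conjTranspose_mul, conjTranspose_mul, hS₀h.eq, hA.eq, Matrix.mul_assoc]
  have hcp₀ : (Q⁻¹ * A).charpoly = (S₀ * A * S₀).charpoly :=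
    charpoly_inv_mul_eq hQ hS₀u hS₀S
  obtain ⟨Uc₀, hU₀1, hdiag₀⟩ : ∃ U : Matrix (Fin N) (Fin N) ℂ, U * star U = 1 ∧
      Uᴴ * (S₀ * A * S₀) * U = diagonal ((↑) ∘ hB₀.eigenvalues : Fin N → ℂ) := by
    refine ⟨(hB₀.eigenvectorUnitary : Matrix (Fin N) (Fin N) ℂ),
      mem_unitaryGroup_iff.mp hB₀.eigenvectorUnitary.2, ?_⟩
    rw [← star_eq_conjTranspose]
    simpa [Unitary.conjStarAlgAut_apply] using hB₀.conjStarAlgAut_star_eigenvectorUnitary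
  set μ : Fin N → ℝ := hB₀.eigenvalues with hμdef
  set P : Finset (Fin N) := Finset.univ.filter (fun i => 0 < μ i) with hPdef
  -- counting: δ = P.card
  have hPcard : P.card = δ := by
    rw [hδ, hcp₀, herm_charpoly_roots hB₀, Multiset.filter_map, Multiset.card_map,
      hPdef, Finset.card_def, Finset.filter_val]
    congr 1
  have hδN : δ ≤ N := by
    rw [← hPcard]
    calc P.card ≤ (Finset.univ : Finset (Fin N)).card := Finset.card_le_univ P
      _ = N := Finset.card_fin N
  have hNlt : N < δ + m := by omega
  -- the two subspaces
  have hUdet : IsUnit (S₀ * Uc₀).det := by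
    rw [det_mul]
    exact (hS₀u).mul (IsUnit.of_mul_eq_one _ (by rw [← det_mul, hU₀1, det_one]))
  set Φ : ({i // i ∈ P} → ℂ) →ₗ[ℂ] (Fin N → ℂ) :=
    (mulVecLin (S₀ * Uc₀)) ∘ₗ extMap ((↑) : {i // i ∈ P} → Fin N) with hΦdef
  have hΦinj : Function.Injective Φ := by
    rw [hΦdef, LinearMap.coe_comp]
    exact Function.Injective.comp
      (mulVec_injective_iff_isUnit.mpr (isUnit_iff_isUnit_det _ |>.mpr hUdet))
      (extMap_injective Subtype.val_injective)
  set V : Submodule ℂ (Fin N → ℂ) := LinearMap.range Φ with hVdef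
  set W : Submodule ℂ (Fin N → ℂ) := LinearMap.range (extMap g) with hWdef
  have hVrank : Module.finrank ℂ V = δ := by
    rw [hVdef, LinearMap.finrank_range_of_inj hΦinj, Module.finrank_pi, Fintype.card_coe,
      hPcard]
  have hWrank : Module.finrank ℂ W = m := by
    rw [hWdef, LinearMap.finrank_range_of_inj (extMap_injective hg), Module.finrank_pi,
      Fintype.card_fin]
  have hsum : Module.finrank ℂ ↥(V ⊔ W) + Module.finrank ℂ ↥(V ⊓ W) = δ + m := by
    rw [Submodule.finrank_sup_add_finrank_inf_eq, hVrank, hWrank]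
  have hsup : Module.finrank ℂ ↥(V ⊔ W) ≤ N := by
    calc Module.finrank ℂ ↥(V ⊔ W) ≤ Module.finrank ℂ (Fin N → ℂ) := Submodule.finrank_le _
      _ = N := by rw [Module.finrank_pi, Fintype.card_fin]
  have hinfpos : 0 < Module.finrank ℂ ↥(V ⊓ W) := by omega
  have hne : V ⊓ W ≠ ⊥ := by
    intro h
    rw [h, finrank_bot] at hinfpos
    exact lt_irrefl 0 hinfpos
  obtain ⟨x, hxVW, hx0⟩ := Submodule.exists_mem_ne_zero_of_ne_bot hne
  have hxV : x ∈ V := hxVW.1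
  have hxW : x ∈ W := hxVW.2
  -- positivity of the quadratic form of A at x
  have hxA : 0 < (star x ⬝ᵥ (A *ᵥ x)).re := by
    obtain ⟨u, hu⟩ := hxV
    obtain ⟨v, hvx, hvsupp⟩ : ∃ v : Fin N → ℂ, (S₀ * Uc₀) *ᵥ v = x ∧ ∀ j ∉ P, v j = 0 := by
      refine ⟨extMap ((↑) : {i // i ∈ P} → Fin N) u, hu, fun j hj => ?_⟩
      exact extMap_apply_not u (fun ⟨i, hi⟩ => hj (hi ▸ i.2))
    have hv0 : v ≠ 0 := by
      intro h
      rw [h, mulVec_zero] at hvx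
      exact hx0 hvx.symm
    have hDD : (S₀ * Uc₀)ᴴ * A * (S₀ * Uc₀) = diagonal ((↑) ∘ μ : Fin N → ℂ) := by
      rw [conjTranspose_mul, hS₀h.eq]
      rw [hμdef]
      rw [← hdiag₀]
      simp only [Matrix.mul_assoc]
    have hval : star x ⬝ᵥ (A *ᵥ x)
        = ((∑ i, μ i * Complex.normSq (v i) : ℝ) : ℂ) := by
      rw [← hvx, quad_conj, hDD, quad_diag]
    rw [hval, Complex.ofReal_re]
    obtain ⟨j, hj⟩ := Function.ne_iff.mp hv0
    have hjP : j ∈ P := by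
      by_contra hjn
      exact hj (hvsupp j hjn)
    refine Finset.sum_pos' (fun i _ => ?_) ⟨j, Finset.mem_univ j, ?_⟩
    · by_cases hiP : i ∈ P
      · exact mul_nonneg (le_of_lt (Finset.mem_filter.mp hiP).2) (Complex.normSq_nonneg _)
      · rw [hvsupp i hiP]
        simp
    · exact mul_pos (Finset.mem_filter.mp hjP).2 (Complex.normSq_pos.mpr hj)
  -- transfer to the submatrix
  obtain ⟨y, hyx⟩ := hxW
  have hy0 : y ≠ 0 := by
    intro h
    rw [h, map_zero] at hyx
    exact hx0 hyx.symm
  have hyA : 0 < (star y ⬝ᵥ ((A.submatrix g g) *ᵥ y)).re := by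
    rw [← quad_extMap hg A y, hyx]
    exact hxA
  have hQT : (Q.submatrix g g).PosDef := by
    refine Matrix.PosDef.of_dotProduct_mulVec_pos (hQ.isHermitian.submatrix g) fun u hu => ?_
    have hu' : extMap g u ≠ 0 := by
      intro h
      exact hu (extMap_injective hg (by rw [h, map_zero]))
    have := hQ.dotProduct_mulVec_pos hu'
    rwa [quad_extMap hg Q u] at this
  have hAT : (A.submatrix g g).IsHermitian := hA.submatrix g
  refine ⟨key_exists_pos_root hQT hAT y hyA, ?_⟩
  intro h
  rw [h, zero_mulVec, dotProduct_zero] at hyA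
  simp at hyA
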